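/- Let A be a commutative von Neumann regular ring, M an A-module, and S ⊆ M a metrizable subset. Then conv(S) = {a₁x₁ + ⋯ + aₙxₙ ∈ M : n ∈ ℕ, xᵢ ∈ S, aᵢ ∈ B(A), aᵢaⱼ = 0 for i ≠ j, a₁ + ⋯ + aₙ = 1} is also a metrizable subset of M. -/
import Mathlib


/-- A subset `S` of a module `M` over `A` is metrizable if the annihilator of `x - y`
is a principal ideal for all `x, y ∈ S`. -/
def IsMetrizable (A : Type) {M : Type} [CommRing A] [AddCommGroup M] [Module A M]
    (S : Set M) : Prop :=
  ∀ x ∈ S, ∀ y ∈ S, (Ideal.torsionOf A M (x - y)).IsPrincipal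

/-- The convex closure of `S` in `M`: all combinations `a₁ x₁ + ⋯ + aₖ xₖ` with
`xᵢ ∈ S`, the `aᵢ` idempotent with pairwise zero products and `a₁ + ⋯ + aₖ = 1`. -/
def convSet (A : Type) {M : Type} [CommRing A] [AddCommGroup M] [Module A M]
    (S : Set M) : Set M :=
  {x | ∃ (k : ℕ) (a : Fin k → A) (xs : Fin k → M),
    (∀ i, a i * a i = a i) ∧ (∀ i, xs i ∈ S) ∧
    (∀ i j, i ≠ j → a i * a j = 0) ∧ (∑ i, a i) = 1 ∧ x = ∑ i, a i • xs i}

/-- If `A` is a commutative von Neumann regular ring and `S` a metrizable subset of an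
`A`-module `M`, then `conv(S)` is also metrizable. -/
theorem stmt3 {A M : Type} [CommRing A] [AddCommGroup M] [Module A M]
    (hreg : ∀ a : A, ∃ b, a * b * a = a)
    (S : Set M) (hS : IsMetrizable A S) :
    IsMetrizable A (convSet A S) := by
  rintro x ⟨k, a, xs, ha, hxsS, horta, hsuma, rfl⟩ y ⟨l, b, ys, hb, hysS, hortb, hsumb, rfl⟩
  -- Choose idempotent generators of the annihilators Ann(xsᵢ - ysⱼ)
  have he : ∀ (i : Fin k) (j : Fin l), ∃ e : A,
      e • (xs i - ys j) = (0 : M) ∧ ∀ c : A, c • (xs i - ys j) = 0 → c * e = c := by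
    intro i j
    obtain ⟨d, hd⟩ := (hS (xs i) (hxsS i) (ys j) (hysS j)).principal
    obtain ⟨c2, hc2⟩ := hreg d
    have hdmem : d • (xs i - ys j) = 0 := by
      rw [← Ideal.mem_torsionOf_iff, hd]
      exact Submodule.mem_span_singleton_self d
    refine ⟨d * c2, ?_, ?_⟩
    · rw [mul_comm, mul_smul, hdmem, smul_zero]
    · intro c hc
      have hm : c ∈ Submodule.span A {d} := by
        rw [← hd, Ideal.mem_torsionOf_iff]; exact hc
      obtain ⟨r, hr⟩ := Submodule.mem_span_singleton.mp hm
      rw [smul_eq_mul] at hr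
      calc c * (d * c2) = r * (d * c2 * d) := by rw [← hr]; ring
        _ = r * d := by rw [hc2]
        _ = c := hr
  choose e he0 hegen using he
  set X := ∑ i, a i • xs i with hX
  set Y := ∑ j, b j • ys j with hY
  -- Key localization identity
  have H1 : ∀ (i : Fin k) (j : Fin l), (a i * b j) • X = (a i * b j) • xs i := by
    intro i j
    rw [hX, Finset.smul_sum]
    rw [Finset.sum_eq_single i]
    · rw [smul_smul]
      have : a i * b j * a i = a i * b j := by
        linear_combination b j * ha i
      rw [this]
    · intro i' _ hne
      rw [smul_smul]
      have : a i * b j * a i' = 0 := by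
        have h0 : a i * a i' = 0 := horta i i' (fun h => hne h.symm)
        calc a i * b j * a i' = b j * (a i * a i') := by ring
          _ = 0 := by rw [h0, mul_zero]
      rw [this, zero_smul]
    · intro h; exact absurd (Finset.mem_univ i) h
  have H2 : ∀ (i : Fin k) (j : Fin l), (a i * b j) • Y = (a i * b j) • ys j := by
    intro i j
    rw [hY, Finset.smul_sum]
    rw [Finset.sum_eq_single j]
    · rw [smul_smul]
      have : a i * b j * b j = a i * b j := by
        linear_combination a i * hb j
      rw [this]
    · intro j' _ hne
      rw [smul_smul]
      have : a i * b j * b j' = 0 := by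
        have h0 : b j * b j' = 0 := hortb j j' (fun h => hne h.symm)
        calc a i * b j * b j' = a i * (b j * b j') := by ring
          _ = 0 := by rw [h0, mul_zero]
      rw [this, zero_smul]
    · intro h; exact absurd (Finset.mem_univ j) h
  have H : ∀ (i : Fin k) (j : Fin l),
      (a i * b j) • (X - Y) = (a i * b j) • (xs i - ys j) := by
    intro i j
    rw [smul_sub, smul_sub, H1 i j, H2 i j]
  refine ⟨⟨∑ i, ∑ j, a i * b j * e i j, ?_⟩⟩
  set g := ∑ i, ∑ j, a i * b j * e i j with hg
  apply le_antisymm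
  · -- torsionOf ≤ span {g}
    intro c hc
    rw [Ideal.mem_torsionOf_iff] at hc
    rw [Submodule.mem_span_singleton]
    refine ⟨c, ?_⟩
    have key : ∀ (i : Fin k) (j : Fin l),
        c * (a i * b j) * e i j = c * (a i * b j) := by
      intro i j
      apply hegen
      calc (c * (a i * b j)) • (xs i - ys j)
          = c • ((a i * b j) • (xs i - ys j)) := by rw [smul_smul]
        _ = c • ((a i * b j) • (X - Y)) := by rw [H i j]
        _ = (a i * b j) • (c • (X - Y)) := smul_comm c _ _
        _ = 0 := by rw [hc, smul_zero]
    calc c • g = ∑ i, ∑ j, c * (a i * b j * e i j) := by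
          rw [hg, smul_eq_mul, Finset.mul_sum]; exact Finset.sum_congr rfl fun i _ => Finset.mul_sum _ _ _
      _ = ∑ i, ∑ j, c * (a i * b j) := by
          refine Finset.sum_congr rfl fun i _ => Finset.sum_congr rfl fun j _ => ?_
          rw [← mul_assoc, key i j]
      _ = c * ((∑ i, a i) * (∑ j, b j)) := by
          rw [Finset.sum_mul_sum, Finset.mul_sum]
          refine Finset.sum_congr rfl fun i _ => ?_
          rw [Finset.mul_sum]
      _ = c := by rw [hsuma, hsumb, one_mul, mul_one]
  · -- span {g} ≤ torsionOf
    rw [Submodule.span_singleton_le_iff_mem, Ideal.mem_torsionOf_iff]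
    calc g • (X - Y) = ∑ i, ∑ j, (a i * b j * e i j) • (X - Y) := by
          rw [hg, Finset.sum_smul]
          exact Finset.sum_congr rfl fun i _ => Finset.sum_smul
      _ = 0 := by
          refine Finset.sum_eq_zero fun i _ => Finset.sum_eq_zero fun j _ => ?_
          calc (a i * b j * e i j) • (X - Y)
              = e i j • ((a i * b j) • (X - Y)) := by rw [smul_smul, mul_comm (a i * b j)]
            _ = e i j • ((a i * b j) • (xs i - ys j)) := by rw [H i j]
            _ = (a i * b j) • (e i j • (xs i - ys j)) := smul_comm _ _ _
            _ = 0 := by rw [he0 i j, smul_zero]
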